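/- Let b ≥ 2 be an integer and let α, β, γ be real numbers. Then at least one of the inequalities ‖α(b^β + b^{γ+1})‖ ≥ ‖α(b²−1)b^γ‖/(b+1) and ‖α(b^{β+1} + b^γ)‖ ≥ ‖α(b²−1)b^γ‖/(b+1) holds. Moreover, φ_b(α(b^β + b^{γ+1})) · φ_b(α(b^{β+1} + b^γ)) ≤ b · φ_b( ‖α(b²−1)b^γ‖/(b+1) ). -/

import Mathlib

open Real

/-- `φ_b(α) = |∑_{0 ≤ m < b} e(αm)|` where `e(x) = exp(2πix)`. -/
noncomputable def phiB (b : ℕ) (α : ℝ) : ℝ :=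
  ‖∑ m ∈ Finset.range b, Complex.exp (2 * Real.pi * Complex.I * (α * m))‖

/-- Distance from a real number to its nearest integer. -/
noncomputable def nearestIntDist (x : ℝ) : ℝ := |x - round x|

open Finset

-- nearest-int distance helpers
lemma nid_le (x : ℝ) (n : ℤ) : |x - round x| ≤ |x - n| := by
  rcases eq_or_ne n (round x) with h | h
  · rw [h]
  · have h1 : |x - round x| ≤ 1/2 := abs_sub_round x
    have h2 : (1:ℝ) ≤ |(round x : ℝ) - n| := by
      have : round x - n ≠ 0 := sub_ne_zero.2 (by exact_mod_cast (Ne.symm h))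
      calc (1:ℝ) = ((1:ℤ):ℝ) := by norm_num
        _ ≤ |((round x - n : ℤ) : ℝ)| := by
            exact_mod_cast Int.one_le_abs (by exact_mod_cast this)
        _ = |(round x : ℝ) - n| := by push_cast; ring_nf
    have := abs_sub_abs_le_abs_sub ((round x:ℝ) - n) (x - n)
    have h3 : |(round x:ℝ) - n - (x - n)| = |x - round x| := by
      rw [abs_sub_comm]; ring_nf
    linarith [abs_sub_abs_le_abs_sub ((round x:ℝ) - n) ((round x:ℝ) - x), abs_nonneg (x-n)]

lemma nid_nonneg (x : ℝ) : 0 ≤ nearestIntDist x := abs_nonneg _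
lemma nid_le_half (x : ℝ) : nearestIntDist x ≤ 1/2 := abs_sub_round x

lemma nid_neg (x : ℝ) : nearestIntDist (-x) = nearestIntDist x := by
  apply le_antisymm
  · calc nearestIntDist (-x) ≤ |(-x) - (-(round x) : ℤ)| := nid_le _ _
      _ = nearestIntDist x := by push_cast; unfold nearestIntDist; rw [← abs_neg]; ring_nf
  · calc nearestIntDist x ≤ |x - (-(round (-x)) : ℤ)| := nid_le _ _
      _ = nearestIntDist (-x) := by push_cast; unfold nearestIntDist; rw [← abs_neg]; ring_nf

lemma nid_add_le (x y : ℝ) : nearestIntDist (x + y) ≤ nearestIntDist x + nearestIntDist y := by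
  calc nearestIntDist (x+y) ≤ |(x+y) - ((round x + round y : ℤ))| := nid_le _ _
    _ ≤ nearestIntDist x + nearestIntDist y := by
        unfold nearestIntDist; push_cast
        calc |(x+y) - ((round x:ℝ) + round y)| = |(x - round x) + (y - round y)| := by ring_nf
          _ ≤ _ := abs_add_le _ _

lemma nid_nat_mul_le (n : ℕ) (x : ℝ) : nearestIntDist (n * x) ≤ n * nearestIntDist x := by
  calc nearestIntDist (n*x) ≤ |n*x - ((n * round x : ℤ))| := nid_le _ _
    _ = n * nearestIntDist x := by
        unfold nearestIntDist; push_cast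
        rw [show (n:ℝ)*x - n*round x = n*(x - round x) by ring, abs_mul, Nat.abs_cast]

noncomputable def cB (b : ℕ) (θ : ℝ) : ℝ := ∑ k ∈ range b, Real.cos ((2*(k:ℝ)+1-b)*θ)

lemma sin_mul_cB (b : ℕ) (θ : ℝ) : Real.sin θ * cB b θ = Real.sin (b * θ) := by
  induction b using Nat.twoStepInduction with
  | zero => simp [cB]
  | one => norm_num [cB]
  | more n ih _ =>
    have hsum : cB (n+2) θ = cB n θ + 2 * Real.cos ((n+1) * θ) := by
      unfold cB
      rw [Finset.sum_range_succ, Finset.sum_range_succ']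
      have h0 : Real.cos ((2*((0:ℕ):ℝ)+1-((n+2:ℕ):ℝ))*θ) = Real.cos ((n+1)*θ) := by
        rw [← Real.cos_neg]; push_cast; ring_nf
      have htop : Real.cos ((2*((n+1:ℕ):ℝ)+1-((n+2:ℕ):ℝ))*θ) = Real.cos ((n+1)*θ) := by
        push_cast; ring_nf
      have hmid : ∀ k ∈ range n, Real.cos ((2*((k+1:ℕ):ℝ)+1-((n+2:ℕ):ℝ))*θ)
          = Real.cos ((2*(k:ℝ)+1-n)*θ) := by
        intro k _; push_cast; ring_nf
      rw [Finset.sum_congr rfl hmid, h0, htop]; push_cast; ring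
    have hrec : Real.sin ((n+2)*θ) = Real.sin (n*θ) + 2 * Real.sin θ * Real.cos ((n+1)*θ) := by
      have := Real.sin_sub_sin ((n+2)*θ) (n*θ)
      have e1 : ((n+2)*θ - n*θ)/2 = θ := by ring
      have e2 : ((n+2)*θ + n*θ)/2 = (n+1)*θ := by ring
      rw [e1, e2] at this; linarith
    push_cast at hrec ⊢
    rw [hsum, hrec, ← ih]; ring

lemma cB_zero (b : ℕ) : cB b 0 = b := by simp [cB]

lemma cB_anti (b : ℕ) {θ₁ θ₂ : ℝ} (h0 : 0 ≤ θ₁) (h12 : θ₁ ≤ θ₂) (h2 : θ₂ * b ≤ π/2) :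
    cB b θ₂ ≤ cB b θ₁ := by
  apply Finset.sum_le_sum
  intro k hk
  have hk' : (k:ℝ) ≤ b - 1 := by
    have := Finset.mem_range.1 hk
    have : (k:ℝ) + 1 ≤ b := by exact_mod_cast this
    linarith
  have hb1 : (1:ℝ) ≤ b := by
    have : 0 < b := lt_of_le_of_lt (Nat.zero_le k) (Finset.mem_range.1 hk)
    exact_mod_cast this
  have habs : |2*(k:ℝ)+1-b| ≤ b := by
    rw [abs_le]; constructor <;> [linarith [Nat.cast_nonneg (α := ℝ) k]; linarith]
  set m : ℝ := 2*(k:ℝ)+1-b with hm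
  have key : ∀ θ : ℝ, Real.cos (m * θ) = Real.cos (|m| * θ) := by
    intro θ
    rcases abs_cases m with ⟨h,_⟩ | ⟨h,_⟩
    · rw [h]
    · rw [h, ← Real.cos_neg]; ring_nf
  rw [key θ₁, key θ₂]
  apply Real.cos_le_cos_of_nonneg_of_le_pi
  · positivity
  · have hbpos : (0:ℝ) < b := by linarith
    have : |m| * θ₂ ≤ b * θ₂ := by
      apply mul_le_mul_of_nonneg_right habs (le_trans h0 h12)
    have hpi : (0:ℝ) < π := Real.pi_pos
    nlinarith [mul_comm θ₂ (b:ℝ)]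
  · exact mul_le_mul_of_nonneg_left h12 (abs_nonneg m)

lemma norm_exp_mul_I_sub_one (θ : ℝ) :
    ‖Complex.exp ((θ:ℂ) * Complex.I) - 1‖ = 2 * |Real.sin (θ/2)| := by
  have h1 : Complex.exp ((θ:ℂ) * Complex.I) - 1
      = ((Real.cos θ - 1 : ℝ) : ℂ) + ((Real.sin θ : ℝ) : ℂ) * Complex.I := by
    rw [Complex.exp_mul_I]
    push_cast
    ring
  rw [h1, Complex.norm_add_mul_I]
  have h2 : (Real.cos θ - 1)^2 + Real.sin θ ^2 = (2 * |Real.sin (θ/2)|)^2 := by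
    rw [Real.abs_sin_half]
    rw [mul_pow, Real.sq_sqrt (by nlinarith [Real.cos_le_one θ] : (0:ℝ) ≤ (1 - Real.cos θ)/2)]
    nlinarith [Real.sin_sq_add_cos_sq θ]
  rw [h2, Real.sqrt_sq (by positivity)]

lemma phiB_nonneg (b : ℕ) (t : ℝ) : 0 ≤ phiB b t := norm_nonneg _

lemma phiB_le (b : ℕ) (t : ℝ) : phiB b t ≤ b := by
  unfold phiB
  calc ‖∑ m ∈ Finset.range b, Complex.exp (2 * Real.pi * Complex.I * (t * m))‖
      ≤ ∑ m ∈ Finset.range b, ‖Complex.exp (2 * Real.pi * Complex.I * (t * m))‖ :=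
        norm_sum_le _ _
    _ = ∑ m ∈ Finset.range b, 1 := by
        apply Finset.sum_congr rfl
        intro m _
        rw [Complex.norm_exp]
        norm_num [Complex.mul_re, Complex.mul_im]
    _ = b := by simp

lemma phiB_mul_sin (b : ℕ) (t : ℝ) :
    phiB b t * (2 * |Real.sin (π * t)|) = 2 * |Real.sin (π * (b * t))| := by
  unfold phiB
  set z : ℂ := Complex.exp (2 * Real.pi * Complex.I * t) with hz
  have hterm : ∀ m : ℕ, Complex.exp (2 * Real.pi * Complex.I * (t * m)) = z ^ m := by
    intro m
    rw [hz, ← Complex.exp_nat_mul]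
    ring_nf
  have hsum : (∑ m ∈ Finset.range b, Complex.exp (2 * Real.pi * Complex.I * (t * m)))
      = ∑ m ∈ Finset.range b, z ^ m := Finset.sum_congr rfl (fun m _ => hterm m)
  have hgeom := geom_sum_mul z b
  have h1 : ‖z - 1‖ = 2 * |Real.sin (π * t)| := by
    have : z = Complex.exp (((2 * π * t : ℝ) : ℂ) * Complex.I) := by
      rw [hz]; push_cast; ring_nf
    rw [this, norm_exp_mul_I_sub_one]
    norm_num
    congr 2
    ring
  have h2 : ‖z ^ b - 1‖ = 2 * |Real.sin (π * (b * t))| := by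
    have : z ^ b = Complex.exp (((2 * π * (b * t) : ℝ) : ℂ) * Complex.I) := by
      rw [hz, ← Complex.exp_nat_mul]
      push_cast; ring_nf
    rw [this, norm_exp_mul_I_sub_one]
    norm_num
    congr 2
    ring
  calc ‖∑ m ∈ Finset.range b, Complex.exp (2 * Real.pi * Complex.I * (t * m))‖ * (2*|Real.sin (π*t)|)
      = ‖(∑ m ∈ Finset.range b, z ^ m) * (z - 1)‖ := by rw [hsum, norm_mul, h1]
    _ = ‖z ^ b - 1‖ := by rw [hgeom]
    _ = 2 * |Real.sin (π * (b * t))| := h2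

lemma abs_sin_pi_int_add (n : ℤ) (d : ℝ) :
    |Real.sin (π * (n + d))| = |Real.sin (π * d)| := by
  have hs : Real.sin (π * n) = 0 := by rw [mul_comm]; exact Real.sin_int_mul_pi n
  have hc : |Real.cos (π * n)| = 1 := by
    have h := Real.sin_sq_add_cos_sq (π * n)
    rw [hs] at h
    rw [← Real.sqrt_sq_eq_abs]
    rw [show Real.cos (π*n)^2 = 1 by nlinarith]
    exact Real.sqrt_one
  have : Real.sin (π * (n + d)) = Real.sin (π*n) * Real.cos (π*d)
      + Real.cos (π*n) * Real.sin (π*d) := by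
    rw [← Real.sin_add]; ring_nf
  rw [this, hs, zero_mul, zero_add, abs_mul, hc, one_mul]

lemma abs_sin_abs (d : ℝ) : |Real.sin (π * d)| = |Real.sin (π * |d|)| := by
  rcases abs_cases d with ⟨h, _⟩ | ⟨h, _⟩
  · rw [h]
  · rw [h, show π * -d = -(π*d) by ring, Real.sin_neg, abs_neg]

lemma abs_sin_eq_sin_nid (x : ℝ) : |Real.sin (π * x)| = Real.sin (π * nearestIntDist x) := by
  have hx : x = (round x : ℝ) + (x - round x) := by ring
  rw [show π * x = π * ((round x : ℝ) + (x - round x)) by rw [← hx]]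
  rw [abs_sin_pi_int_add, abs_sin_abs]
  have : (0:ℝ) ≤ Real.sin (π * |x - round x|) := by
    apply Real.sin_nonneg_of_nonneg_of_le_pi (by positivity)
    have := abs_sub_round x
    nlinarith [Real.pi_pos]
  rw [abs_of_nonneg this]; rfl

lemma abs_sin_nat_mul (b : ℕ) (x : ℝ) :
    |Real.sin (π * (b * x))| = |Real.sin (π * (b * (x - round x)))| := by
  have : (b:ℝ) * x = ((b * round x : ℤ) : ℝ) + b * (x - round x) := by push_cast; ring
  rw [this, abs_sin_pi_int_add]

lemma phiB_zero_arg (b : ℕ) : phiB b 0 = b := by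
  unfold phiB
  simp

lemma phiB_eq_cB (b : ℕ) (u : ℝ) (h0 : 0 ≤ u) (hu : (b:ℝ) * u ≤ 1/2) :
    phiB b u = cB b (π * u) := by
  rcases eq_or_lt_of_le h0 with h | h
  · rw [← h, phiB_zero_arg, mul_zero, cB_zero]
  · have hb1 : (1:ℕ) ≤ b ∨ b = 0 := by omega
    rcases hb1 with hb1 | rfl
    · have hb1' : (1:ℝ) ≤ b := by exact_mod_cast hb1
      have hu2 : u ≤ 1/2 := by nlinarith
      have hs : 0 < Real.sin (π * u) := by
        apply Real.sin_pos_of_pos_of_lt_pi (by positivity)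
        nlinarith [Real.pi_pos]
      have key := phiB_mul_sin b u
      have h1 : |Real.sin (π * u)| = Real.sin (π * u) := abs_of_pos hs
      have h2 : |Real.sin (π * (b * u))| = Real.sin (π * (b * u)) := by
        apply abs_of_nonneg
        apply Real.sin_nonneg_of_nonneg_of_le_pi (by positivity)
        nlinarith [Real.pi_pos]
      rw [h1, h2] at key
      have h3 : Real.sin (π * (b * u)) = Real.sin (π * u) * cB b (π * u) := by
        rw [show π * (b * u) = (b:ℝ) * (π * u) by ring, ← sin_mul_cB]
      rw [h3] at key
      have := mul_left_cancel₀ (by positivity : (2:ℝ) * Real.sin (π*u) ≠ 0)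
        (show (2 * Real.sin (π*u)) * phiB b u = (2 * Real.sin (π*u)) * cB b (π*u) by linarith)
      exact this
    · simp [phiB, cB]

set_option maxHeartbeats 2000000 in
lemma phiB_le_cB (b : ℕ) (hb : 1 ≤ b) (x u : ℝ) (h0 : 0 ≤ u) (hux : u ≤ nearestIntDist x)
    (hu : u ≤ 1/(2*((b:ℝ)+1))) : phiB b x ≤ cB b (π * u) := by
  have hbR : (1:ℝ) ≤ b := by exact_mod_cast hb
  have hu2b : u ≤ 1/(2*(b:ℝ)) := by
    apply le_trans hu
    rw [div_le_div_iff₀ (by positivity) (by positivity)]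
    nlinarith
  rcases eq_or_lt_of_le h0 with h | hupos
  · rw [← h, mul_zero, cB_zero]; exact phiB_le b x
  · set w := nearestIntDist x with hw
    have hw0 : 0 < w := lt_of_lt_of_le hupos hux
    have hwhalf : w ≤ 1/2 := nid_le_half x
    have key := phiB_mul_sin b x
    have hsin : |Real.sin (π * x)| = Real.sin (π * w) := abs_sin_eq_sin_nid x
    have hsw : 0 < Real.sin (π * w) := by
      apply Real.sin_pos_of_pos_of_lt_pi (by positivity)
      nlinarith [Real.pi_pos]
    rcases le_or_gt w (1/(2*(b:ℝ))) with hcase | hcase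
    · -- w small: phiB = cB b (π w) ≤ cB b (π u)
      have hbw : (b:ℝ) * w ≤ 1/2 := by
        rw [le_div_iff₀ (by positivity : (0:ℝ) < 2*(b:ℝ))] at hcase
        nlinarith
      have habs : |Real.sin (π * (b * x))| = Real.sin (π * (b * w)) := by
        rw [abs_sin_nat_mul, show (b:ℝ) * (x - round x) = b * (x - round x) from rfl]
        have : |Real.sin (π * ((b:ℝ) * (x - round x)))| = |Real.sin (π * |(b:ℝ) * (x - round x)|)| :=
          abs_sin_abs _
        rw [this, abs_mul, Nat.abs_cast]
        have : (b:ℝ) * |x - round x| = b * w := rfl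
        rw [this]
        apply abs_of_nonneg
        apply Real.sin_nonneg_of_nonneg_of_le_pi (by positivity)
        nlinarith [Real.pi_pos]
      rw [hsin, habs] at key
      have h3 : Real.sin (π * (b * w)) = Real.sin (π * w) * cB b (π * w) := by
        rw [show π * ((b:ℝ) * w) = (b:ℝ) * (π * w) by ring, ← sin_mul_cB]
      have heq : phiB b x = cB b (π * w) := by
        have := mul_left_cancel₀ (by positivity : (2:ℝ) * Real.sin (π*w) ≠ 0)
          (show (2 * Real.sin (π*w)) * phiB b x = (2 * Real.sin (π*w)) * cB b (π*w) by
            rw [h3] at key; linarith)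
        exact this
      rw [heq]
      apply cB_anti b (by positivity) (by nlinarith [Real.pi_pos])
      calc π * w * b = π * ((b:ℝ) * w) := by ring
        _ ≤ π / 2 := by nlinarith [Real.pi_pos]
    · -- w large: phiB ≤ 1/sin(π/(2b)) = cB b (π/(2b)) ≤ cB b (π u)
      have hbpos : (0:ℝ) < b := by linarith
      rw [div_lt_iff₀ (by positivity)] at hcase   -- 1 < w * (2*b)
      have hu1 : u * (2*(b:ℝ)) ≤ 1 := by
        rw [le_div_iff₀ (by positivity)] at hu2b; exact hu2b
      have hsb : 0 < Real.sin (π / (2*(b:ℝ))) := by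
        apply Real.sin_pos_of_pos_of_lt_pi (by positivity)
        rw [div_lt_iff₀ (by positivity)]
        nlinarith [Real.pi_pos]
      have hmono : Real.sin (π / (2*(b:ℝ))) ≤ Real.sin (π * w) := by
        apply Real.sin_le_sin_of_le_of_le_pi_div_two
        · have h1 : (0:ℝ) ≤ π/(2*(b:ℝ)) := by positivity
          nlinarith [Real.pi_pos]
        · nlinarith [Real.pi_pos]
        · rw [div_le_iff₀ (by positivity)]
          nlinarith [Real.pi_pos]
      have hineq : phiB b x ≤ 1 / Real.sin (π * w) := by
        rw [hsin] at key
        have h1 : |Real.sin (π * (b*x))| ≤ 1 := Real.abs_sin_le_one _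
        rw [le_div_iff₀ hsw]
        nlinarith [phiB_nonneg b x]
      have hbne : (b:ℝ) ≠ 0 := by positivity
      have hcb : cB b (π / (2*(b:ℝ))) * Real.sin (π / (2*(b:ℝ))) = 1 := by
        have h := sin_mul_cB b (π / (2*(b:ℝ)))
        rw [show (b:ℝ) * (π / (2*(b:ℝ))) = π/2 by field_simp, Real.sin_pi_div_two] at h
        rw [mul_comm]
        exact h
      have hcbeq : cB b (π / (2*(b:ℝ))) = 1 / Real.sin (π / (2*(b:ℝ))) :=
        eq_one_div_of_mul_eq_one_left hcb
      have hcbpos : 0 < cB b (π / (2*(b:ℝ))) := by rw [hcbeq]; exact one_div_pos.mpr hsb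
      have hmid : 1 / Real.sin (π * w) ≤ cB b (π / (2*(b:ℝ))) := by
        rw [div_le_iff₀ hsw]
        calc (1:ℝ) = cB b (π / (2*(b:ℝ))) * Real.sin (π / (2*(b:ℝ))) := hcb.symm
          _ ≤ cB b (π / (2*(b:ℝ))) * Real.sin (π * w) :=
              mul_le_mul_of_nonneg_left hmono hcbpos.le
      apply le_trans hineq (le_trans hmid _)
      apply cB_anti b (mul_nonneg Real.pi_pos.le h0)
      · rw [le_div_iff₀ (by positivity : (0:ℝ) < 2*(b:ℝ))]
        nlinarith [mul_le_mul_of_nonneg_left hu1 Real.pi_pos.le]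
      · rw [show π / (2*(b:ℝ)) * b = π/2 by field_simp]

/-- Bound for a product of a pair of `φ_b`-factors: at least one of the two arguments is
at least `‖α(b²-1)b^γ‖/(b+1)` away from the integers, and the product of the two factors
is bounded by `b · φ_b(‖α(b²-1)b^γ‖/(b+1))`. -/
theorem phiB_pair_bound (b : ℕ) (hb : 2 ≤ b) (α β γ : ℝ) :
    (nearestIntDist (α * ((b : ℝ) ^ β + (b : ℝ) ^ (γ + 1))) ≥
        nearestIntDist (α * ((b : ℝ) ^ 2 - 1) * (b : ℝ) ^ γ) / ((b : ℝ) + 1) ∨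
      nearestIntDist (α * ((b : ℝ) ^ (β + 1) + (b : ℝ) ^ γ)) ≥
        nearestIntDist (α * ((b : ℝ) ^ 2 - 1) * (b : ℝ) ^ γ) / ((b : ℝ) + 1)) ∧
    phiB b (α * ((b : ℝ) ^ β + (b : ℝ) ^ (γ + 1))) *
        phiB b (α * ((b : ℝ) ^ (β + 1) + (b : ℝ) ^ γ)) ≤
      (b : ℝ) * phiB b (nearestIntDist (α * ((b : ℝ) ^ 2 - 1) * (b : ℝ) ^ γ) / ((b : ℝ) + 1)) := by
  have hbR : (2:ℝ) ≤ b := by exact_mod_cast hb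
  have hbpos : (0:ℝ) < b := by linarith
  have hbne : (b:ℝ) ≠ 0 := ne_of_gt hbpos
  set X := α * ((b : ℝ) ^ β + (b : ℝ) ^ (γ + 1)) with hX
  set Y := α * ((b : ℝ) ^ (β + 1) + (b : ℝ) ^ γ) with hY
  set D := α * ((b : ℝ) ^ 2 - 1) * (b : ℝ) ^ γ with hD
  have halg : (b:ℝ) * X - Y = D := by
    rw [hX, hY, hD]
    rw [Real.rpow_add_one hbne β, Real.rpow_add_one hbne γ]
    ring
  have hDle : nearestIntDist D ≤ (b:ℝ) * nearestIntDist X + nearestIntDist Y := by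
    calc nearestIntDist D = nearestIntDist ((b:ℝ) * X + (-Y)) := by
          rw [show (b:ℝ) * X + (-Y) = (b:ℝ)*X - Y by ring, halg]
      _ ≤ nearestIntDist ((b:ℝ) * X) + nearestIntDist (-Y) := nid_add_le _ _
      _ = nearestIntDist ((b:ℝ) * X) + nearestIntDist Y := by rw [nid_neg]
      _ ≤ (b:ℝ) * nearestIntDist X + nearestIntDist Y := by
          exact add_le_add (nid_nat_mul_le b X) le_rfl
  set u := nearestIntDist D / ((b:ℝ) + 1) with hu
  have hb1pos : (0:ℝ) < (b:ℝ) + 1 := by linarith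
  have hu0 : 0 ≤ u := div_nonneg (nid_nonneg D) hb1pos.le
  have huD : ((b:ℝ) + 1) * u = nearestIntDist D := by
    rw [hu]; field_simp
  have huhalf : u ≤ 1/(2*((b:ℝ)+1)) := by
    rw [hu, div_le_div_iff₀ hb1pos (by positivity)]
    nlinarith [nid_le_half D]
  have hdisj : u ≤ nearestIntDist X ∨ u ≤ nearestIntDist Y := by
    by_contra hcon
    push_neg at hcon
    obtain ⟨h1, h2⟩ := hcon
    have : (b:ℝ) * nearestIntDist X < (b:ℝ) * u := by
      exact mul_lt_mul_of_pos_left h1 hbpos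
    linarith [huD]
  have hbu : (b:ℝ) * u ≤ 1/2 := by
    calc (b:ℝ) * u ≤ (b:ℝ) * (1/(2*((b:ℝ)+1))) :=
          mul_le_mul_of_nonneg_left huhalf hbpos.le
      _ = (b:ℝ)/(2*((b:ℝ)+1)) := by ring
      _ ≤ 1/2 := by rw [div_le_div_iff₀ (by positivity) (by norm_num : (0:ℝ) < 2)]; nlinarith
  have hphiu : phiB b u = cB b (π * u) := phiB_eq_cB b u hu0 hbu
  refine ⟨hdisj, ?_⟩
  rw [hphiu]
  rcases hdisj with hcase | hcase
  · have h1 : phiB b X ≤ cB b (π * u) := phiB_le_cB b (by omega) X u hu0 hcase huhalf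
    have h2 : phiB b Y ≤ (b:ℝ) := phiB_le b Y
    have hcb0 : 0 ≤ cB b (π * u) := hphiu ▸ phiB_nonneg b u
    calc phiB b X * phiB b Y ≤ cB b (π * u) * (b:ℝ) :=
          mul_le_mul h1 h2 (phiB_nonneg b Y) hcb0
      _ = (b:ℝ) * cB b (π * u) := mul_comm _ _
  · have h1 : phiB b Y ≤ cB b (π * u) := phiB_le_cB b (by omega) Y u hu0 hcase huhalf
    have h2 : phiB b X ≤ (b:ℝ) := phiB_le b X
    have hcb0 : 0 ≤ cB b (π * u) := hphiu ▸ phiB_nonneg b u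
    calc phiB b X * phiB b Y ≤ (b:ℝ) * cB b (π * u) :=
          mul_le_mul h2 h1 (phiB_nonneg b Y) hbpos.le
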